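/- (Generalized Fiedler–Bapat identity) Let Q be a real symmetric positive semidefinite n×n matrix with ker(Q) = span(1), n ≥ 2. Set ζ := diagvec(Q†), Ω := 1ζᵀ + ζ1ᵀ − 2Q†, p := (1/2)Qζ + (1/n)1, and σ² := (1/4)ζᵀQζ + (1/n)1ᵀζ. Then [[0, 1ᵀ],[1, Ω]]^{−1} = −(1/2)·[[4σ², −2pᵀ],[−2p, Q]]. -/

import Mathlib

open Matrix Classical

/-- The Moore–Penrose pseudoinverse of a real matrix, defined via its four
characterizing Penrose equations (which have a unique solution). -/
noncomputable def pinv {m k : Type*} [Fintype m] [Fintype k]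
    (A : Matrix m k ℝ) : Matrix k m ℝ :=
  if h : ∃ X : Matrix k m ℝ,
      A * X * A = A ∧ X * A * X = X ∧ (A * X)ᵀ = A * X ∧ (X * A)ᵀ = X * A
  then h.choose else 0

theorem pinv_eq_of {m k : Type*} [Fintype m] [Fintype k] (A : Matrix m k ℝ) (X : Matrix k m ℝ)
    (e1 : A * X * A = A) (e2 : X * A * X = X) (e3 : (A * X)ᵀ = A * X) (e4 : (X * A)ᵀ = X * A) :
    pinv A = X := by
  have hex : ∃ X : Matrix k m ℝ,
      A * X * A = A ∧ X * A * X = X ∧ (A * X)ᵀ = A * X ∧ (X * A)ᵀ = X * A :=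
    ⟨X, e1, e2, e3, e4⟩
  rw [pinv, dif_pos hex]
  obtain ⟨g1, g2, g3, g4⟩ := hex.choose_spec
  set Y := hex.choose with hY
  have hAY : A * Y = A * X := by
    calc A * Y = (A * Y)ᵀ := g3.symm
      _ = Yᵀ * Aᵀ := transpose_mul _ _
      _ = Yᵀ * (A * X * A)ᵀ := by rw [e1]
      _ = Yᵀ * (Aᵀ * (A * X)ᵀ) := by rw [transpose_mul (A * X) A]
      _ = Yᵀ * Aᵀ * (A * X) := by rw [e3, Matrix.mul_assoc]
      _ = (A * Y)ᵀ * (A * X) := by rw [transpose_mul]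
      _ = (A * Y) * (A * X) := by rw [g3]
      _ = A * Y * A * X := by simp only [Matrix.mul_assoc]
      _ = A * X := by rw [g1]
  have hYA : Y * A = X * A := by
    calc Y * A = (Y * A)ᵀ := g4.symm
      _ = Aᵀ * Yᵀ := transpose_mul _ _
      _ = (A * (X * A))ᵀ * Yᵀ := by rw [← Matrix.mul_assoc, e1]
      _ = (X * A)ᵀ * Aᵀ * Yᵀ := by rw [transpose_mul A (X * A)]
      _ = (X * A) * (Aᵀ * Yᵀ) := by rw [e4, Matrix.mul_assoc]
      _ = (X * A) * (Y * A)ᵀ := by rw [transpose_mul]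
      _ = (X * A) * (Y * A) := by rw [g4]
      _ = X * (A * Y * A) := by simp only [Matrix.mul_assoc]
      _ = X * A := by rw [g1]
  calc Y = Y * A * Y := g2.symm
    _ = X * A * Y := by rw [hYA]
    _ = X * (A * Y) := Matrix.mul_assoc _ _ _
    _ = X * (A * X) := by rw [hAY]
    _ = X * A * X := (Matrix.mul_assoc _ _ _).symm
    _ = X := e2

theorem generalized_fiedler_bapat_identity
    {n : ℕ} (hn : 2 ≤ n) (Q : Matrix (Fin n) (Fin n) ℝ)
    (hQ : Q.PosSemidef)
    (hker : ∀ v : Fin n → ℝ, Q.mulVec v = 0 ↔ ∃ c : ℝ, v = fun _ => c)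
    (ζ : Fin n → ℝ) (hζ : ζ = fun i => pinv Q i i)
    (Ω : Matrix (Fin n) (Fin n) ℝ)
    (hΩ : Ω = Matrix.of (fun _ j => ζ j) + Matrix.of (fun i _ => ζ i) - 2 • pinv Q)
    (p : Fin n → ℝ) (hp : p = (1 / 2 : ℝ) • Q.mulVec ζ + (1 / (n : ℝ)) • ((fun _ => 1) : Fin n → ℝ))
    (σ2 : ℝ) (hσ2 : σ2 = (1 / 4) * (ζ ⬝ᵥ Q.mulVec ζ) + (1 / (n : ℝ)) * ∑ i, ζ i) :
    (Matrix.fromBlocks (0 : Matrix (Fin 1) (Fin 1) ℝ)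
        (Matrix.of fun _ _ => (1 : ℝ)) (Matrix.of fun _ _ => (1 : ℝ)) Ω)⁻¹ =
      (-(1 / 2 : ℝ)) • Matrix.fromBlocks
        (Matrix.of fun _ _ => 4 * σ2)
        (Matrix.of fun _ j => -2 * p j)
        (Matrix.of fun i _ => -2 * p i) Q := by
  have hn0 : (n : ℝ) ≠ 0 := Nat.cast_ne_zero.mpr (by omega)
  have hsym : ∀ i j, Q i j = Q j i := by
    intro i j
    have h2 := congrFun (congrFun hQ.1 j) i
    simpa [Matrix.conjTranspose_apply] using h2
  have hQ1 : Q.mulVec (fun _ => (1 : ℝ)) = 0 := (hker _).mpr ⟨1, rfl⟩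
  have hrow : ∀ i, ∑ k, Q i k = 0 := by
    intro i
    have := congrFun hQ1 i
    simpa [Matrix.mulVec, dotProduct] using this
  have hcol : ∀ j, ∑ k, Q k j = 0 := by
    intro j
    rw [Finset.sum_congr rfl (fun k _ => hsym k j)]
    exact hrow j
  set C : Matrix (Fin n) (Fin n) ℝ := Matrix.of (fun _ _ => 1 / (n : ℝ)) with hCdef
  have hQC : Q * C = 0 := by
    ext i j
    simp only [Matrix.mul_apply, hCdef, Matrix.of_apply, Matrix.zero_apply]
    rw [← Finset.sum_mul, hrow, zero_mul]
  have hCQ : C * Q = 0 := by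
    ext i j
    simp only [Matrix.mul_apply, hCdef, Matrix.of_apply, Matrix.zero_apply]
    rw [← Finset.mul_sum, hcol, mul_zero]
  have hCC : C * C = C := by
    ext i j
    simp only [Matrix.mul_apply, hCdef, Matrix.of_apply]
    rw [Finset.sum_const, Finset.card_univ, Fintype.card_fin, nsmul_eq_mul]
    field_simp
  set B : Matrix (Fin n) (Fin n) ℝ := Q + C with hBdef
  have hBC : B * C = C := by rw [hBdef, Matrix.add_mul, hQC, hCC, zero_add]
  have hCB : C * B = C := by rw [hBdef, Matrix.mul_add, hCQ, hCC, zero_add]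
  have hdet : B.det ≠ 0 := by
    intro hd
    obtain ⟨v, hv0, hv⟩ := Matrix.exists_mulVec_eq_zero_iff.mpr hd
    have hq0 : (0 : ℝ) ≤ v ⬝ᵥ Q.mulVec v := by simpa using hQ.dotProduct_mulVec_nonneg v
    have hCv : v ⬝ᵥ C.mulVec v = (∑ i, v i) ^ 2 / n := by
      simp only [dotProduct, Matrix.mulVec, hCdef, Matrix.of_apply]
      rw [Finset.sum_congr rfl (fun i _ => by
        rw [← Finset.mul_sum]; ring :
        ∀ i ∈ Finset.univ, v i * ∑ k, 1 / (n:ℝ) * v k = v i * ((∑ k, v k) / n))]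
      rw [← Finset.sum_mul]
      ring
    have hBv : v ⬝ᵥ B.mulVec v = v ⬝ᵥ Q.mulVec v + (∑ i, v i) ^ 2 / n := by
      rw [hBdef, Matrix.add_mulVec, dotProduct_add, hCv]
    have h0 : v ⬝ᵥ B.mulVec v = 0 := by rw [hv, dotProduct_zero]
    have hsq : (0 : ℝ) ≤ (∑ i, v i) ^ 2 / n := by positivity
    have hq0' : v ⬝ᵥ Q.mulVec v = 0 := by linarith [hBv, h0, hsq, hq0]
    have hQv : Q.mulVec v = 0 := (hQ.dotProduct_mulVec_zero_iff v).mp (by simpa using hq0')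
    obtain ⟨c, rfl⟩ := (hker v).mp hQv
    have hsum : (∑ _i : Fin n, c) = (n : ℝ) * c := by
      simp [Finset.sum_const, Fintype.card_fin, mul_comm]
    have h1 : ((n : ℝ) * c) ^ 2 / n = 0 := by rw [← hsum]; linarith [hBv, h0, hq0']
    have h2 : ((n : ℝ) * c) = 0 := by
      have h3 : ((n : ℝ) * c) ^ 2 = 0 := by
        rcases div_eq_zero_iff.mp h1 with h | h
        · exact h
        · exact absurd h hn0
      exact pow_eq_zero_iff two_ne_zero |>.mp h3
    have hc : c = 0 := by
      rcases mul_eq_zero.mp h2 with h | h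
      · exact absurd h hn0
      · exact h
    exact hv0 (funext fun _ => hc)
  have hu : IsUnit B.det := isUnit_iff_ne_zero.mpr hdet
  have hBB : B * B⁻¹ = 1 := Matrix.mul_nonsing_inv B hu
  have hB'B : B⁻¹ * B = 1 := Matrix.nonsing_inv_mul B hu
  set X : Matrix (Fin n) (Fin n) ℝ := B⁻¹ - C with hXdef
  have hCBi : C * B⁻¹ = C := by
    calc C * B⁻¹ = (C * B) * B⁻¹ := by rw [hCB]
      _ = C * (B * B⁻¹) := Matrix.mul_assoc _ _ _
      _ = C := by rw [hBB, Matrix.mul_one]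
  have hBiC : B⁻¹ * C = C := by
    calc B⁻¹ * C = B⁻¹ * (B * C) := by rw [hBC]
      _ = (B⁻¹ * B) * C := (Matrix.mul_assoc _ _ _).symm
      _ = C := by rw [hB'B, Matrix.one_mul]
  have hQB : Q = B - C := by rw [hBdef, add_sub_cancel_right]
  have hQX : Q * X = 1 - C := by
    rw [hXdef, Matrix.mul_sub, hQC, sub_zero, hQB, Matrix.sub_mul, hBB, hCBi]
  have hXQ : X * Q = 1 - C := by
    rw [hXdef, Matrix.sub_mul, hCQ, sub_zero, hQB, Matrix.mul_sub, hB'B, hBiC]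
  have hXC : X * C = 0 := by rw [hXdef, Matrix.sub_mul, hBiC, hCC, sub_self]
  have hCX : C * X = 0 := by rw [hXdef, Matrix.mul_sub, hCBi, hCC, sub_self]
  have hCsym : Cᵀ = C := by ext i j; simp [hCdef]
  have hP : pinv Q = X := by
    apply pinv_eq_of
    · rw [hQX, Matrix.sub_mul, Matrix.one_mul, hCQ, sub_zero]
    · calc X * Q * X = (1 - C) * X := by rw [hXQ]
        _ = X - C * X := by rw [Matrix.sub_mul, Matrix.one_mul]
        _ = X := by rw [hCX, sub_zero]
    · rw [hQX, transpose_sub, transpose_one, hCsym]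
    · rw [hXQ, transpose_sub, transpose_one, hCsym]
  have hPQ : pinv Q * Q = 1 - C := by rw [hP]; exact hXQ
  have hPC : pinv Q * C = 0 := by rw [hP]; exact hXC
  have hPQsum : ∀ i j, ∑ k, pinv Q i k * Q k j = (if i = j then (1 : ℝ) else 0) - 1 / n := by
    intro i j
    have := congrFun (congrFun hPQ i) j
    simpa [Matrix.mul_apply, Matrix.one_apply, hCdef, Matrix.sub_apply] using this
  have hPsum : ∀ i, ∑ k, pinv Q i k = 0 := by
    intro i
    have := congrFun (congrFun hPC i) i
    simp only [Matrix.mul_apply, hCdef, Matrix.of_apply, Matrix.zero_apply] at this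
    rw [← Finset.sum_mul] at this
    rcases mul_eq_zero.mp this with h | h
    · exact h
    · exact absurd h (one_div_ne_zero hn0)
  have hpe : ∀ x, p x = (1 / 2 : ℝ) * (∑ k, Q x k * ζ k) + 1 / n := by
    intro x
    rw [hp]
    simp [Matrix.mulVec, dotProduct]
  have hsump : ∑ j, p j = 1 := by
    rw [Finset.sum_congr rfl (fun x _ => hpe x), Finset.sum_add_distrib, ← Finset.mul_sum]
    have h1 : ∑ j, ∑ k, Q j k * ζ k = 0 := by
      rw [Finset.sum_comm]
      rw [Finset.sum_congr rfl (fun k _ => by rw [← Finset.sum_mul, hcol, zero_mul] :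
        ∀ k ∈ Finset.univ, ∑ j, Q j k * ζ k = 0)]
      simp
    have h2 : ∑ _j : Fin n, (1 : ℝ) / n = 1 := by
      rw [Finset.sum_const, Finset.card_univ, Fintype.card_fin, nsmul_eq_mul]
      field_simp
    rw [h1, h2, mul_zero, zero_add]
  have hσ2' : σ2 = 1 / 4 * (∑ x, ζ x * ∑ k, Q x k * ζ k) + 1 / n * ∑ x, ζ x := by
    rw [hσ2]; simp [dotProduct, Matrix.mulVec]
  have hΩe : ∀ i x, Ω i x = ζ x + ζ i - 2 * pinv Q i x := by
    intro i x
    rw [hΩ]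
    have h2 : (2 • pinv Q) i x = 2 * pinv Q i x := by
      rw [Matrix.smul_apply, two_smul, two_mul]
    simp only [Matrix.sub_apply, Matrix.add_apply, Matrix.of_apply, h2]
  have hS2 : ∀ i, ∑ x, pinv Q i x * p x = (1 / 2) * (ζ i - (∑ k, ζ k) / n) := by
    intro i
    have e1 : ∀ x, pinv Q i x * p x =
        (1 / 2 : ℝ) * (pinv Q i x * ∑ k, Q x k * ζ k) + (1 / (n : ℝ)) * pinv Q i x := by
      intro x; rw [hpe]; ring
    rw [Finset.sum_congr rfl (fun x _ => e1 x), Finset.sum_add_distrib, ← Finset.mul_sum,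
      ← Finset.mul_sum, hPsum i, mul_zero, add_zero]
    congr 1
    have e2 : ∀ x, pinv Q i x * ∑ k, Q x k * ζ k = ∑ k, pinv Q i x * Q x k * ζ k := by
      intro x
      rw [Finset.mul_sum]
      exact Finset.sum_congr rfl fun k _ => (mul_assoc _ _ _).symm
    rw [Finset.sum_congr rfl (fun x _ => e2 x), Finset.sum_comm]
    have e3 : ∀ k, ∑ x, pinv Q i x * Q x k * ζ k = ((if i = k then (1 : ℝ) else 0) - 1 / n) * ζ k := by
      intro k; rw [← Finset.sum_mul, hPQsum i k]
    rw [Finset.sum_congr rfl (fun k _ => e3 k)]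
    have e4 : ∀ k, ((if i = k then (1 : ℝ) else 0) - 1 / n) * ζ k =
        (if i = k then ζ k else 0) - ζ k / n := by
      intro k; split <;> ring
    rw [Finset.sum_congr rfl (fun k _ => e4 k), Finset.sum_sub_distrib, ← Finset.sum_div]
    simp [Finset.sum_ite_eq]
  have hS1 : ∑ x, ζ x * p x = (1 / 2) * (∑ x, ζ x * ∑ k, Q x k * ζ k) + (1 / n) * ∑ x, ζ x := by
    have e1 : ∀ x, ζ x * p x =
        (1 / 2 : ℝ) * (ζ x * ∑ k, Q x k * ζ k) + (1 / (n : ℝ)) * ζ x := by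
      intro x; rw [hpe]; ring
    rw [Finset.sum_congr rfl (fun x _ => e1 x), Finset.sum_add_distrib, ← Finset.mul_sum,
      ← Finset.mul_sum]
  have hΩp : ∀ i, ∑ x, Ω i x * p x = 2 * σ2 := by
    intro i
    have e1 : ∀ x, Ω i x * p x = ζ x * p x + ζ i * p x - 2 * (pinv Q i x * p x) := by
      intro x; rw [hΩe]; ring
    rw [Finset.sum_congr rfl (fun x _ => e1 x), Finset.sum_sub_distrib, Finset.sum_add_distrib,
      ← Finset.mul_sum, ← Finset.mul_sum, hS1, hS2, hsump, hσ2']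
    field_simp
    ring
  have hΩQ : ∀ i j, ∑ k, Ω i k * Q k j =
      (∑ k, Q j k * ζ k) - 2 * (if i = j then (1 : ℝ) else 0) + 2 / n := by
    intro i j
    have e1 : ∀ k, Ω i k * Q k j = Q j k * ζ k + ζ i * Q k j - 2 * (pinv Q i k * Q k j) := by
      intro k; rw [hΩe, hsym k j]; ring
    rw [Finset.sum_congr rfl (fun k _ => e1 k), Finset.sum_sub_distrib, Finset.sum_add_distrib,
      ← Finset.mul_sum, ← Finset.mul_sum, hcol j, mul_zero, add_zero, hPQsum i j]
    ring
  apply Matrix.inv_eq_right_inv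
  rw [Matrix.mul_smul, Matrix.fromBlocks_multiply, Matrix.fromBlocks_smul, ← Matrix.fromBlocks_one]
  refine Matrix.fromBlocks_inj.mpr ⟨?_, ?_, ?_, ?_⟩
  · rw [Matrix.zero_mul, zero_add]
    ext i j
    simp only [Matrix.smul_apply, Matrix.mul_apply, Matrix.of_apply, smul_eq_mul, one_mul]
    have hij : i = j := Subsingleton.elim i j
    rw [hij, Matrix.one_apply_eq]
    have : ∑ x, (-2 : ℝ) * p x = -2 := by rw [← Finset.mul_sum, hsump, mul_one]
    rw [this]; norm_num
  · rw [Matrix.zero_mul, zero_add]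
    ext i j
    simp only [Matrix.smul_apply, Matrix.mul_apply, Matrix.of_apply, smul_eq_mul, one_mul,
      Matrix.zero_apply]
    rw [hcol j, mul_zero]
  · ext i j
    simp only [Matrix.smul_apply, Matrix.add_apply, Matrix.mul_apply, Matrix.of_apply,
      smul_eq_mul, Matrix.zero_apply, Fin.sum_univ_one, one_mul]
    have e : ∑ x, Ω i x * (-2 * p x) = -2 * ∑ x, Ω i x * p x := by
      rw [Finset.mul_sum]
      exact Finset.sum_congr rfl fun x _ => by ring
    rw [e, hΩp i]
    ring
  · ext i j
    simp only [Matrix.smul_apply, Matrix.add_apply, Matrix.mul_apply, Matrix.of_apply,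
      smul_eq_mul, Fin.sum_univ_one, one_mul, Matrix.one_apply]
    rw [hΩQ i j, hpe j]
    split <;> ring
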